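/- The explicit 6-partite intersecting hypergraph H with the 13 edges E_1,…,E_13 (as specified) has covering number exactly 5: no set of 4 vertices meets all 13 edges, while the 5 vertices of part 2 form a cover. -/
import Mathlib


def Intersecting {V : Type*} (E : Finset (Finset V)) : Prop :=
  ∀ e ∈ E, ∀ f ∈ E, ∃ v, v ∈ e ∧ v ∈ f

def IsCover {V : Type*} (E : Finset (Finset V)) (C : Finset V) : Prop :=
  ∀ e ∈ E, ∃ v ∈ C, v ∈ e

noncomputable def coverNum {V : Type*} (E : Finset (Finset V)) : ℕ :=
  sInf {n | ∃ C : Finset V, IsCover E C ∧ C.card = n}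

def Partite {V : Type*} (r : ℕ) (part : V → Fin r) (E : Finset (Finset V)) : Prop :=
  ∀ e ∈ E, ∀ i : Fin r, (e.filter (fun v => part v = i)).card = 1

open Classical in
noncomputable def deg {V : Type*} (E : Finset (Finset V)) (v : V) : ℕ :=
  (E.filter (fun e => v ∈ e)).card

def E1 : Finset (ℕ × ℕ) := {(1,1), (2,4), (3,4), (4,5), (5,3), (6,5)}

def E2 : Finset (ℕ × ℕ) := {(1,2), (2,5), (3,2), (4,5), (5,5), (6,3)}

def E3 : Finset (ℕ × ℕ) := {(1,3), (2,4), (3,5), (4,3), (5,4), (6,3)}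

def E4 : Finset (ℕ × ℕ) := {(1,4), (2,1), (3,5), (4,4), (5,5), (6,5)}

def E5 : Finset (ℕ × ℕ) := {(1,4), (2,5), (3,4), (4,2), (5,4), (6,4)}

def E6 : Finset (ℕ × ℕ) := {(1,5), (2,2), (3,5), (4,5), (5,1), (6,4)}

def E7 : Finset (ℕ × ℕ) := {(1,5), (2,5), (3,1), (4,3), (5,2), (6,5)}

def E8 : Finset (ℕ × ℕ) := {(1,5), (2,4), (3,3), (4,2), (5,5), (6,2)}

def E9 : Finset (ℕ × ℕ) := {(1,5), (2,3), (3,4), (4,4), (5,3), (6,3)}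

def E10 : Finset (ℕ × ℕ) := {(1,6), (2,2), (3,4), (4,3), (5,5), (6,1)}

def E11 : Finset (ℕ × ℕ) := {(1,6), (2,4), (3,2), (4,4), (5,2), (6,4)}

def E12 : Finset (ℕ × ℕ) := {(1,6), (2,5), (3,5), (4,1), (5,3), (6,2)}

def E13 : Finset (ℕ × ℕ) := {(1,6), (2,3), (3,3), (4,5), (5,4), (6,5)}

def ryserH6 : Finset (Finset (ℕ × ℕ)) := {E1, E2, E3, E4, E5, E6, E7, E8, E9, E10, E11, E12, E13}


def edgesL : List (List (ℕ × ℕ)) :=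
  [[(1,1), (2,4), (3,4), (4,5), (5,3), (6,5)],
   [(1,2), (2,5), (3,2), (4,5), (5,5), (6,3)],
   [(1,3), (2,4), (3,5), (4,3), (5,4), (6,3)],
   [(1,4), (2,1), (3,5), (4,4), (5,5), (6,5)],
   [(1,4), (2,5), (3,4), (4,2), (5,4), (6,4)],
   [(1,5), (2,2), (3,5), (4,5), (5,1), (6,4)],
   [(1,5), (2,5), (3,1), (4,3), (5,2), (6,5)],
   [(1,5), (2,4), (3,3), (4,2), (5,5), (6,2)],
   [(1,5), (2,3), (3,4), (4,4), (5,3), (6,3)],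
   [(1,6), (2,2), (3,4), (4,3), (5,5), (6,1)],
   [(1,6), (2,4), (3,2), (4,4), (5,2), (6,4)],
   [(1,6), (2,5), (3,5), (4,1), (5,3), (6,2)],
   [(1,6), (2,3), (3,3), (4,5), (5,4), (6,5)]]

def uncovered (S : List (ℕ × ℕ)) (e : List (ℕ × ℕ)) : Bool :=
  e.all fun v => decide (v ∉ S)

def good : ℕ → List (ℕ × ℕ) → Bool
  | 0, S => (edgesL.find? (uncovered S)).isSome
  | n+1, S =>
    match edgesL.find? (uncovered S) with
    | none => false
    | some e => e.all fun v => good n (v :: S)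

lemma mem_edgesL : ∀ l ∈ edgesL, l.toFinset ∈ ryserH6 := by decide

lemma good_sound : ∀ n S, good n S = true →
    ∀ C : Finset (ℕ × ℕ), (∀ v ∈ S, v ∈ C) → C.card ≤ S.toFinset.card + n →
    ¬ IsCover ryserH6 C := by
  intro n
  induction n with
  | zero =>
    intro S hg C hSC hcard hcov
    cases hfind : edgesL.find? (uncovered S) with
    | none => simp only [good, hfind, Option.isSome] at hg; exact Bool.noConfusion hg
    | some l =>
      have hlL : l ∈ edgesL := List.mem_of_find?_eq_some hfind
      have hunc : uncovered S l = true := List.find?_some hfind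
      obtain ⟨v, hvC, hve⟩ := hcov l.toFinset (mem_edgesL l hlL)
      have hvl : v ∈ l := List.mem_toFinset.1 hve
      have hvS : v ∉ S := by
        have := List.all_eq_true.1 hunc v hvl
        simpa [uncovered] using this
      have h1 : insert v S.toFinset ⊆ C := by
        refine Finset.insert_subset hvC ?_
        intro w hw; exact hSC w (List.mem_toFinset.1 hw)
      have h2 : (insert v S.toFinset).card = S.toFinset.card + 1 :=
        Finset.card_insert_of_notMem (by simpa using hvS)
      have := Finset.card_le_card h1
      omega
  | succ n ih =>
    intro S hg C hSC hcard hcov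
    cases hfind : edgesL.find? (uncovered S) with
    | none => simp only [good, hfind] at hg; exact Bool.noConfusion hg
    | some l =>
      simp only [good, hfind] at hg
      have hlL : l ∈ edgesL := List.mem_of_find?_eq_some hfind
      have hunc : uncovered S l = true := List.find?_some hfind
      obtain ⟨v, hvC, hve⟩ := hcov l.toFinset (mem_edgesL l hlL)
      have hvl : v ∈ l := List.mem_toFinset.1 hve
      have hvS : v ∉ S := by
        have := List.all_eq_true.1 hunc v hvl
        simpa [uncovered] using this
      have hgv : good n (v :: S) = true := List.all_eq_true.1 hg v hvl
      refine ih (v :: S) hgv C ?_ ?_ hcov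
      · intro w hw
        rcases List.mem_cons.1 hw with h | h
        · exact h ▸ hvC
        · exact hSC w h
      · have : (v :: S).toFinset = insert v S.toFinset := by simp
        rw [this, Finset.card_insert_of_notMem (by simpa using hvS)]
        omega

lemma key : good 4 [] = true := by decide

instance : DecidablePred (IsCover ryserH6) := fun C => by
  unfold IsCover; infer_instance

theorem stmt10 :
    (∀ C : Finset (ℕ × ℕ), C.card ≤ 4 → ¬ IsCover ryserH6 C) ∧
    IsCover ryserH6 {(2,1), (2,2), (2,3), (2,4), (2,5)} := by
  constructor
  · intro C hC hcov
    exact good_sound 4 [] key C (by simp) (by simpa using hC) hcov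
  · decide
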